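/- Let v be a positive C² solution on (0,∞) of v'' + ((n-1-2α)/r + r/2) v' + r^{-2}(v^p - L^{p-1} v) = 0 with p > (n+2)/(n-2), bounded near 0 together with r v' and r² v'', and with r v'(r) → 0 as r → 0⁺. Then v(r) has a limit v₀ as r → 0⁺, and v₀ ∈ {0, L}. -/

import Mathlib

open Set Filter Real

lemma aux_log (g g' : ℝ → ℝ) (hg : ∀ r > 0, HasDerivAt g (g' r) r)
    (h0 : Tendsto g (nhdsWithin 0 (Ioi 0)) (nhds 0)) (c : ℝ) (hc : c < 0)
    (hlim : Tendsto (fun r => r * g' r) (nhdsWithin 0 (Ioi 0)) (nhds c)) : False := by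
  have hev : ∀ᶠ r in nhdsWithin 0 (Ioi 0), r * g' r ≤ c / 2 := by
    have : Iio (c/2) ∈ nhds c := Iio_mem_nhds (by linarith)
    filter_upwards [hlim this] with r hr using le_of_lt hr
  obtain ⟨u, hu, hsub⟩ := mem_nhdsGT_iff_exists_Ioo_subset.mp hev
  set r₀ := min u 1 with hr₀def
  have hr₀ : 0 < r₀ := lt_min hu zero_lt_one
  have hbound : ∀ r ∈ Ioo (0:ℝ) r₀, r * g' r ≤ c / 2 := by
    intro r hr
    exact hsub ⟨hr.1, lt_of_lt_of_le hr.2 (min_le_left _ _)⟩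
  set h : ℝ → ℝ := fun r => g r - (c/2) * Real.log r with hdef
  have hderiv : ∀ x ∈ Ioo (0:ℝ) r₀, HasDerivAt h (g' x - (c/2) * x⁻¹) x := by
    intro x hx
    exact (hg x hx.1).sub (((Real.hasDerivAt_log hx.1.ne').const_mul (c/2)))
  have hanti : AntitoneOn h (Ioc 0 r₀) := by
    apply antitoneOn_of_deriv_nonpos (convex_Ioc 0 r₀)
    · intro x hx
      exact (((hg x hx.1).continuousAt).sub (((Real.hasDerivAt_log hx.1.ne').const_mul (c/2)).continuousAt)).continuousWithinAt
    · intro x hx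
      rw [interior_Ioc] at hx
      exact (hderiv x hx).differentiableAt.differentiableWithinAt
    · intro x hx
      rw [interior_Ioc] at hx
      rw [(hderiv x hx).deriv]
      have hx0 : 0 < x := hx.1
      have := hbound x hx
      have h1 : g' x ≤ c / (2 * x) := by
        rw [le_div_iff₀ (by positivity)]
        nlinarith
      have h2 : (c/2) * x⁻¹ = c / (2*x) := by field_simp
      linarith [h1, h2.ge]
  have key : ∀ r ∈ Ioo (0:ℝ) r₀, h r₀ + (c/2) * Real.log r ≤ g r := by
    intro r hr
    have := hanti ⟨hr.1, hr.2.le⟩ ⟨hr₀, le_rfl⟩ hr.2.le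
    simp only [hdef] at this ⊢
    linarith
  have htop : Tendsto (fun r => (c/2) * Real.log r) (nhdsWithin 0 (Ioi 0)) atTop := by
    exact (tendsto_const_mul_atTop_of_neg (by linarith : c/2 < 0)).mpr Real.tendsto_log_nhdsGT_zero
  have h1 : ∀ᶠ r in nhdsWithin 0 (Ioi 0), (1:ℝ) - h r₀ ≤ (c/2) * Real.log r :=
    htop.eventually_ge_atTop _
  have h2 : ∀ᶠ r in nhdsWithin 0 (Ioi 0), g r < 1 := by
    have : Iio (1:ℝ) ∈ nhds (0:ℝ) := Iio_mem_nhds one_pos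
    exact h0 this
  have h3 : ∀ᶠ r in nhdsWithin 0 (Ioi 0), r ∈ Ioo (0:ℝ) r₀ :=
    Ioo_mem_nhdsGT_of_mem ⟨le_rfl, hr₀⟩
  obtain ⟨r, hr1, hr2, hr3⟩ := (h1.and (h2.and h3)).exists
  have := key r hr3
  linarith

set_option maxHeartbeats 1000000 in
theorem stmt9 (n : ℕ) (hn : 2 < n) (p : ℝ) (hp : ((n : ℝ) + 2) / ((n : ℝ) - 2) < p)
    (α L : ℝ) (hα : α = 2 / (p - 1)) (hL : 0 < L)
    (hLp : L ^ (p - 1) = 2 / (p - 1) ^ 2 * (((n : ℝ) - 2) * p - n))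
    (v : ℝ → ℝ) (hpos : ∀ r > 0, 0 < v r)
    (hC2 : ContDiffOn ℝ 2 v (Ioi 0))
    (heq : ∀ r > 0, deriv (deriv v) r + (((n : ℝ) - 1 - 2 * α) / r + r / 2) * deriv v r
      + r ^ (-2 : ℝ) * (v r ^ p - L ^ (p - 1) * v r) = 0)
    (C₀ : ℝ) (hbd : ∀ r ∈ Ioo (0:ℝ) 1,
      v r + r * |deriv v r| + r ^ 2 * |deriv (deriv v) r| ≤ C₀)
    (hrv : Tendsto (fun r : ℝ => r * deriv v r) (nhdsWithin 0 (Ioi 0)) (nhds 0)) :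
    ∃ v₀ : ℝ, Tendsto v (nhdsWithin 0 (Ioi 0)) (nhds v₀) ∧ (v₀ = 0 ∨ v₀ = L) := by
  have hp1pos : True := trivial
  set l := nhdsWithin (0:ℝ) (Ioi 0) with hl
  have hn2 : (0:ℝ) < (n:ℝ) - 2 := by
    have : (2:ℝ) < (n:ℝ) := by exact_mod_cast hn
    linarith
  have hp1 : 1 < p := by
    have h1 : (1:ℝ) < ((n:ℝ) + 2) / ((n:ℝ) - 2) := by
      rw [lt_div_iff₀ hn2]; linarith
    linarith
  have hp0 : 0 < p - 1 := by linarith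
  set K := L ^ (p - 1) with hK
  have hKpos : 0 < K := Real.rpow_pos_of_pos hL _
  set β := (n:ℝ) - 2 - 2 * α with hβdef
  have hβ : 0 < β := by
    have h1 : (n:ℝ) + 2 < p * ((n:ℝ) - 2) := (div_lt_iff₀ hn2).mp hp
    have h2 : 4 < ((n:ℝ) - 2) * (p - 1) := by nlinarith
    have h3 : 2 * α = 4 / (p - 1) := by rw [hα]; ring
    have h4 : 4 / (p - 1) < (n:ℝ) - 2 := by
      rw [div_lt_iff₀ hp0]; linarith [h2]
    rw [hβdef, h3]; linarith
  -- derivative infrastructure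
  have hv1 : ∀ r > 0, HasDerivAt v (deriv v r) r := by
    intro r hr
    have := (hC2.differentiableOn (by norm_num)) r hr
    exact (this.differentiableAt (isOpen_Ioi.mem_nhds hr)).hasDerivAt
  have hdd : ContDiffOn ℝ 1 (deriv v) (Ioi 0) := by
    have := hC2.deriv_of_isOpen (m := 1) isOpen_Ioi (by norm_num)
    simpa using this
  have hv2 : ∀ r > 0, HasDerivAt (deriv v) (deriv (deriv v) r) r := by
    intro r hr
    have := (hdd.differentiableOn (by norm_num)) r hr
    exact (this.differentiableAt (isOpen_Ioi.mem_nhds hr)).hasDerivAt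
  -- rewritten equation
  have heq' : ∀ r > 0, r ^ 2 * deriv (deriv v) r
      + (((n:ℝ) - 1 - 2 * α) * r + r ^ 3 / 2) * deriv v r + (v r ^ p - K * v r) = 0 := by
    intro r hr
    have h2 : r ^ (-2:ℝ) = (r ^ 2)⁻¹ := by
      rw [show (-2:ℝ) = -(2:ℝ) by norm_num, Real.rpow_neg hr.le,
        show (2:ℝ) = ((2:ℕ):ℝ) by norm_num, Real.rpow_natCast]
    have := heq r hr
    rw [h2] at this
    have hr2 : (r:ℝ) ^ 2 ≠ 0 := by positivity
    field_simp at this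
    have key : 2*r*(r ^ 2 * deriv (deriv v) r
        + (((n:ℝ) - 1 - 2 * α) * r + r ^ 3 / 2) * deriv v r + (v r ^ p - K * v r)) = 0 := by
      linear_combination r * this
    have h2r : (2:ℝ)*r ≠ 0 := by positivity
    exact (mul_eq_zero.mp key).resolve_left h2r
  -- the potential F
  set F : ℝ → ℝ := fun x => x ^ (p + 1) / (p + 1) - K * x ^ 2 / 2 with hFdef
  have hp1ne : p + 1 ≠ 0 := by linarith
  have hF' : ∀ x : ℝ, 0 < x → HasDerivAt F (x ^ p - K * x) x := by
    intro x hx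
    have h1 : HasDerivAt (fun y : ℝ => y ^ (p+1)) ((p+1) * x ^ (p+1-1)) x :=
      Real.hasDerivAt_rpow_const (Or.inl hx.ne')
    have h2 : HasDerivAt (fun y : ℝ => y ^ (p+1) / (p+1)) (x ^ p) x := by
      have := h1.div_const (p+1)
      refine this.congr_deriv ?_
      rw [show p + 1 - 1 = p by ring]
      field_simp
    have h3 : HasDerivAt (fun y : ℝ => K * y ^ 2 / 2) (K * x) x := by
      have := ((hasDerivAt_pow 2 x).const_mul K).div_const 2
      refine this.congr_deriv ?_
      norm_num; ring
    exact h2.sub h3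
  -- energy
  set g : ℝ → ℝ := fun r => r * deriv v r with hgdef
  have hg' : ∀ r > 0, HasDerivAt g (deriv v r + r * deriv (deriv v) r) r := by
    intro r hr
    have := (hasDerivAt_id' r).mul (hv2 r hr)
    exact this.congr_deriv (by ring)
  set e : ℝ → ℝ := fun r => g r ^ 2 / 2 + F (v r) with hedef
  have he' : ∀ r > 0, HasDerivAt e
      (g r * (deriv v r + r * deriv (deriv v) r) + (v r ^ p - K * v r) * deriv v r) r := by
    intro r hr
    have h1 : HasDerivAt (fun r => g r ^ 2 / 2)
        (g r * (deriv v r + r * deriv (deriv v) r)) r := by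
      have := ((hg' r hr).pow 2).div_const 2
      refine this.congr_deriv ?_
      ring
    have h2 : HasDerivAt (fun r => F (v r)) ((v r ^ p - K * v r) * deriv v r) r :=
      (hF' (v r) (hpos r hr)).comp r (hv1 r hr)
    exact h1.add h2
  have heval : ∀ r > 0, g r * (deriv v r + r * deriv (deriv v) r)
      + (v r ^ p - K * v r) * deriv v r = -(deriv v r ^ 2 * (β * r + r ^ 3 / 2)) := by
    intro r hr
    have h := heq' r hr
    simp only [hgdef, hβdef]
    linear_combination (deriv v r) * h
  have hanti : AntitoneOn e (Ioi 0) := by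
    apply antitoneOn_of_deriv_nonpos (convex_Ioi 0)
    · intro x hx
      exact (he' x hx).continuousAt.continuousWithinAt
    · intro x hx
      rw [interior_Ioi] at hx
      exact (he' x hx).differentiableAt.differentiableWithinAt
    · intro x hx
      rw [interior_Ioi] at hx
      rw [(he' x hx).deriv, heval x hx]
      have hx0 : (0:ℝ) < x := hx
      have h1 : 0 ≤ β * x + x ^ 3 / 2 := by nlinarith [mul_pos hβ hx0, pow_pos hx0 3]
      nlinarith [mul_nonneg (sq_nonneg (deriv v x)) h1]
  -- bounds
  have hvb : ∀ r ∈ Ioo (0:ℝ) 1, v r ≤ C₀ := by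
    intro r hr
    have := hbd r hr
    have h1 : 0 ≤ r * |deriv v r| := mul_nonneg hr.1.le (abs_nonneg _)
    have h2 : 0 ≤ r ^ 2 * |deriv (deriv v) r| := mul_nonneg (by positivity) (abs_nonneg _)
    linarith
  have hgb : ∀ r ∈ Ioo (0:ℝ) 1, |g r| ≤ C₀ := by
    intro r hr
    have := hbd r hr
    have h2 : 0 ≤ r ^ 2 * |deriv (deriv v) r| := mul_nonneg (by positivity) (abs_nonneg _)
    have h3 : |g r| = r * |deriv v r| := by
      rw [hgdef]; rw [abs_mul, abs_of_pos hr.1]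
    have h4 : 0 < v r := hpos r hr.1
    linarith [h3.le, h3.ge]
  have hC0 : 0 ≤ C₀ := by
    have := hvb (1/2) (by norm_num)
    have := hpos (1/2) (by norm_num)
    linarith
  have heb : ∀ r ∈ Ioo (0:ℝ) 1, e r ≤ C₀ ^ (p+1) / (p+1) + C₀ ^ 2 / 2 := by
    intro r hr
    have h1 : g r ^ 2 ≤ C₀ ^ 2 := sq_le_sq' (by linarith [abs_le.mp (hgb r hr)]) (by linarith [abs_le.mp (hgb r hr)])
    have h2 : v r ^ (p+1) ≤ C₀ ^ (p+1) :=
      Real.rpow_le_rpow (hpos r hr.1).le (hvb r hr) (by linarith)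
    have h3 : 0 ≤ K * v r ^ 2 / 2 := by positivity
    have hp1pos' : (0:ℝ) < p + 1 := by linarith
    have h4 : v r ^ (p+1) / (p+1) ≤ C₀ ^ (p+1) / (p+1) := by gcongr
    simp only [hedef, hFdef]
    linarith
  -- the limit of the energy
  set E₀ := sSup (e '' Ioo 0 1) with hE₀
  have hSne : (e '' Ioo 0 1).Nonempty := ⟨e (1/2), ⟨1/2, by norm_num, rfl⟩⟩
  have hSbdd : BddAbove (e '' Ioo 0 1) := by
    refine ⟨C₀ ^ (p+1) / (p+1) + C₀ ^ 2 / 2, ?_⟩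
    rintro x ⟨r, hr, rfl⟩
    exact heb r hr
  have heE : ∀ r ∈ Ioo (0:ℝ) 1, e r ≤ E₀ := fun r hr =>
    le_csSup hSbdd ⟨r, hr, rfl⟩
  have helim : Tendsto e l (nhds E₀) := by
    rw [Metric.tendsto_nhds]
    intro ε hε
    obtain ⟨y, ⟨r₁, hr₁, rfl⟩, hy⟩ := exists_lt_of_lt_csSup hSne (by linarith : E₀ - ε < E₀)
    have h3 : ∀ᶠ r in l, r ∈ Ioo (0:ℝ) r₁ := Ioo_mem_nhdsGT_of_mem ⟨le_rfl, hr₁.1⟩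
    filter_upwards [h3] with r hr
    have h4 : e r₁ ≤ e r := hanti hr.1 hr₁.1 hr.2.le
    have h5 : e r ≤ E₀ := heE r ⟨hr.1, hr.2.trans hr₁.2⟩
    rw [Real.dist_eq, abs_lt]
    constructor <;> linarith
  have hg0 : Tendsto g l (nhds 0) := hrv
  have hFvlim : Tendsto (fun r => F (v r)) l (nhds E₀) := by
    have h1 : Tendsto (fun r => g r ^ 2 / 2) l (nhds 0) := by
      have := (hg0.mul hg0).div_const 2
      simpa [sq] using this
    have := helim.sub h1
    simp only [sub_zero] at this
    apply this.congr
    intro r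
    simp only [hedef]; ring
  -- liminf / limsup
  have hevIoo : ∀ᶠ r in l, r ∈ Ioo (0:ℝ) 1 := Ioo_mem_nhdsGT_of_mem ⟨le_rfl, one_pos⟩
  have hub : l.IsBoundedUnder (· ≤ ·) v :=
    ⟨C₀, eventually_map.2 (hevIoo.mono fun r hr => hvb r hr)⟩
  have hlb : l.IsBoundedUnder (· ≥ ·) v :=
    ⟨0, eventually_map.2 (hevIoo.mono fun r hr => (hpos r hr.1).le)⟩
  have hNB : l.NeBot := nhdsGT_neBot 0
  set a := liminf v l with ha
  set b := limsup v l with hb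
  have hab : a ≤ b := liminf_le_limsup hub hlb
  have ha0 : 0 ≤ a :=
    le_liminf_of_le hub.isCoboundedUnder_ge (hevIoo.mono fun r hr => (hpos r hr.1).le)
  -- every intermediate value c gives F c = E₀
  have hcont : ContinuousOn v (Ioi 0) := hC2.continuousOn
  have hc_all : ∀ c, a < c → c < b → F c = E₀ := by
    intro c hac hcb
    have hfl : ∃ᶠ r in l, v r < c := frequently_lt_of_liminf_lt hub.isCoboundedUnder_ge hac
    have hfg : ∃ᶠ r in l, c < v r := frequently_lt_of_lt_limsup hlb.isCoboundedUnder_le hcb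
    have hfc : ∃ᶠ r in l, v r = c := by
      rw [frequently_iff]
      intro U hU
      obtain ⟨u, hu, hsub⟩ := mem_nhdsGT_iff_exists_Ioo_subset.mp hU
      have hmem : Ioo (0:ℝ) u ∈ l := Ioo_mem_nhdsGT_of_mem ⟨le_rfl, hu⟩
      obtain ⟨s, hs1, hs2⟩ := (hfl.and_eventually (eventually_mem_set.2 hmem)).exists
      obtain ⟨t, ht1, ht2⟩ := (hfg.and_eventually (eventually_mem_set.2 hmem)).exists
      rcases le_total s t with hst | hts
      · have hsub2 : Icc s t ⊆ Ioo (0:ℝ) u := fun x hx =>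
          ⟨lt_of_lt_of_le hs2.1 hx.1, lt_of_le_of_lt hx.2 ht2.2⟩
        obtain ⟨x, hx, hvx⟩ := intermediate_value_Icc hst
          (hcont.mono fun y hy => (hsub2 hy).1) ⟨hs1.le, ht1.le⟩
        exact ⟨x, hsub (hsub2 hx), hvx⟩
      · have hsub2 : Icc t s ⊆ Ioo (0:ℝ) u := fun x hx =>
          ⟨lt_of_lt_of_le ht2.1 hx.1, lt_of_le_of_lt hx.2 hs2.2⟩
        obtain ⟨x, hx, hvx⟩ := intermediate_value_Icc' hts
          (hcont.mono fun y hy => (hsub2 hy).1) ⟨hs1.le, ht1.le⟩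
        exact ⟨x, hsub (hsub2 hx), hvx⟩
    have hfreq : ∃ᶠ r in l, F (v r) = F c := hfc.mono fun r hr => by rw [hr]
    exact (tendsto_nhds_unique_of_frequently_eq hFvlim tendsto_const_nhds hfreq).symm
  -- a = b
  have haeqb : a = b := by
    by_contra hne
    have hlt : a < b := lt_of_le_of_ne hab hne
    set m := (a + b) / 2 with hm
    have hF'sign : ∀ ξ : ℝ, 0 < ξ → ξ ≠ L → deriv F ξ ≠ 0 := by
      intro ξ hξ hξL
      rw [(hF' ξ hξ).deriv]
      have hpow : ξ ^ p = ξ ^ (p-1) * ξ := by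
        rw [← Real.rpow_add_one hξ.ne' (p-1)]; ring_nf
      rcases lt_or_gt_of_ne hξL with h | h
      · have : ξ ^ (p-1) < L ^ (p-1) := Real.rpow_lt_rpow hξ.le h hp0
        intro habs
        rw [hpow] at habs
        nlinarith [this, hξ]
      · have : L ^ (p-1) < ξ ^ (p-1) := Real.rpow_lt_rpow hL.le h hp0
        intro habs
        rw [hpow] at habs
        nlinarith [this, hξ]
    -- choose a subinterval of (a,b) avoiding L and 0
    obtain ⟨c₁, c₂, hc₁c₂, hac₁, hc₂b, havoid⟩ :
        ∃ c₁ c₂ : ℝ, c₁ < c₂ ∧ a < c₁ ∧ c₂ < b ∧ ∀ ξ ∈ Ioo c₁ c₂, 0 < ξ ∧ ξ ≠ L := by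
      have hm1 : a < m := by rw [hm]; linarith
      have hm2 : m < b := by rw [hm]; linarith
      rcases le_or_gt L m with hLm | hmL
      · refine ⟨m + (b - m)/3, m + 2*(b - m)/3, by linarith, by linarith, by linarith, ?_⟩
        intro ξ hξ
        have h1 : m < ξ := by
          have := hξ.1
          linarith
        exact ⟨by linarith, by intro hh; rw [hh] at h1; linarith⟩
      · refine ⟨a + (m - a)/3, a + 2*(m - a)/3, by linarith, by linarith, by linarith, ?_⟩
        intro ξ hξ
        have h1 : ξ < m := by
          have := hξ.2
          linarith
        have h2 : a < ξ := by
          have := hξ.1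
          linarith
        exact ⟨by linarith, by intro hh; rw [hh] at h1; linarith⟩
    have hFc₁ : F c₁ = E₀ := hc_all c₁ hac₁ (hc₁c₂.trans hc₂b)
    have hFc₂ : F c₂ = E₀ := hc_all c₂ (hac₁.trans hc₁c₂) hc₂b
    have hFcont : ContinuousOn F (Icc c₁ c₂) := by
      intro x _
      apply ContinuousWithinAt.sub
      · exact ((Real.continuousAt_rpow_const x (p+1) (Or.inr (by linarith))).div_const
          (p+1)).continuousWithinAt
      · exact (((continuous_const.mul (continuous_pow 2)).div_const 2).continuousAt).continuousWithinAt
    obtain ⟨ξ, hξmem, hξder⟩ := exists_deriv_eq_zero hc₁c₂ hFcont (hFc₁.trans hFc₂.symm)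
    obtain ⟨hξ0, hξL⟩ := havoid ξ hξmem
    exact hF'sign ξ hξ0 hξL hξder
  have hvlim : Tendsto v l (nhds a) :=
    tendsto_of_liminf_eq_limsup rfl haeqb.symm hub hlb
  -- the limit is a critical point of F
  refine ⟨a, hvlim, ?_⟩
  have hcrit : a ^ p - K * a = 0 := by
    by_contra hne
    set c := -(a ^ p - K * a) with hc
    have hglim : Tendsto (fun r => r * (deriv v r + r * deriv (deriv v) r)) l (nhds c) := by
      have hid : ∀ r > 0, r * (deriv v r + r * deriv (deriv v) r)
          = -β * g r - r^2/2 * g r - (v r ^ p - K * v r) := by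
        intro r hr
        have h := heq' r hr
        simp only [hgdef, hβdef]
        linear_combination h
      have hrsq : Tendsto (fun r : ℝ => r^2/2 * g r) l (nhds 0) := by
        have h1 : Tendsto (fun r : ℝ => r^2/2) l (nhds 0) := by
          have : Tendsto (fun r : ℝ => r^2/2) (nhds 0) (nhds 0) := by
            have := (continuous_pow 2).div_const (2:ℝ)
            have h0 := this.tendsto (0:ℝ)
            simpa using h0
          exact this.mono_left nhdsWithin_le_nhds
        simpa using h1.mul hg0
      have hphi : Tendsto (fun r => v r ^ p - K * v r) l (nhds (a ^ p - K * a)) := by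
        have hca : ContinuousAt (fun x : ℝ => x ^ p - K * x) a := by
          apply ContinuousAt.sub
          · exact Real.continuousAt_rpow_const a p (Or.inr (by linarith))
          · exact (continuous_const.mul continuous_id).continuousAt
        exact hca.tendsto.comp hvlim
      have hcomb : Tendsto (fun r => -β * g r - r^2/2 * g r - (v r ^ p - K * v r)) l (nhds c) := by
        have h1 : Tendsto (fun r => -β * g r) l (nhds 0) := by
          simpa using hg0.const_mul (-β)
        have := (h1.sub hrsq).sub hphi
        simpa [hc] using this
      apply hcomb.congr'
      filter_upwards [self_mem_nhdsWithin] with r hr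
      exact (hid r hr).symm
    rcases lt_trichotomy c 0 with hclt | hc0 | hcgt
    · exact absurd (aux_log g (fun r => deriv v r + r * deriv (deriv v) r)
        hg' hg0 c hclt hglim) id
    · exact hne (by rw [hc] at hc0; linarith)
    · refine absurd (aux_log (fun r => -g r) (fun r => -(deriv v r + r * deriv (deriv v) r))
        (fun r hr => (hg' r hr).neg) (by simpa using hg0.neg) (-c) (by linarith) ?_) id
      have := hglim.neg
      apply this.congr
      intro r; ring
  rcases eq_or_lt_of_le ha0 with h0 | hapos
  · exact Or.inl h0.symm
  · right
    have hpow : a ^ p = a ^ (p-1) * a := by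
      rw [← Real.rpow_add_one hapos.ne' (p-1)]; ring_nf
    have hKa : a ^ (p-1) = K := by
      rw [hpow] at hcrit
      have : (a ^ (p-1) - K) * a = 0 := by linear_combination hcrit
      rcases mul_eq_zero.mp this with h | h
      · linarith [h]
      · exact absurd h hapos.ne'
    rcases lt_trichotomy a L with h | h | h
    · exfalso
      have := Real.rpow_lt_rpow hapos.le h hp0
      rw [hKa] at this
      exact lt_irrefl _ this
    · exact h
    · exfalso
      have := Real.rpow_lt_rpow hL.le h hp0
      rw [hKa] at this
      exact lt_irrefl _ this
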